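/- Let Q be an n×n real symmetric positive definite matrix, let A be an m×n real matrix of full row rank (A is surjective), and let B be a p×n real matrix of full row rank with Range(Bᵀ) = Ker(A). Then for every μ ∈ ℝⁿ there exists a unique pair (f_B, v_A) ∈ ℝᵖ × ℝᵐ such that μ = Bᵀ f_B + Q Aᵀ v_A. -/

import Mathlib

open Matrix

lemma transpose_mulVec_inj {m n : Type*} [Fintype m] [Fintype n]
    (A : Matrix m n ℝ) (hA : Function.Surjective A.mulVec) :
    ∀ v : m → ℝ, Aᵀ *ᵥ v = 0 → v = 0 := by
  intro v hv
  obtain ⟨x, hx⟩ := hA v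
  have h : v ⬝ᵥ v = 0 := by
    calc v ⬝ᵥ v = v ⬝ᵥ (A *ᵥ x) := by rw [hx]
    _ = (v ᵥ* A) ⬝ᵥ x := (dotProduct_mulVec v A x)
    _ = (Aᵀ *ᵥ v) ⬝ᵥ x := by rw [Matrix.mulVec_transpose]
    _ = 0 := by rw [hv]; simp
  exact (dotProduct_self_eq_zero).mp h

/-- If `Q` is symmetric positive definite, `A` has full row rank, `B` has
full row rank, and `Range(Bᵀ) = Ker(A)`, then every `μ` decomposes uniquely as
`μ = Bᵀ f_B + Q Aᵀ v_A`. -/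
theorem stmt_5 {n m p : Type*} [Fintype n] [Fintype m] [Fintype p]
    [DecidableEq n] [DecidableEq m] [DecidableEq p]
    (Q : Matrix n n ℝ) (A : Matrix m n ℝ) (B : Matrix p n ℝ)
    (hQsym : Qᵀ = Q) (hQ : Q.PosDef)
    (hA : Function.Surjective A.mulVec)
    (hBsurj : Function.Surjective B.mulVec)
    (hB : LinearMap.range Bᵀ.mulVecLin = LinearMap.ker A.mulVecLin) :
    ∀ μ : n → ℝ, ∃! pair : (p → ℝ) × (m → ℝ),
      μ = Bᵀ *ᵥ pair.1 + (Q * Aᵀ) *ᵥ pair.2 := by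
  intro μ
  have hATinj := transpose_mulVec_inj A hA
  have hBTinj := transpose_mulVec_inj B hBsurj
  -- M = A * Q * Aᵀ is injective
  set M : Matrix m m ℝ := A * (Q * Aᵀ) with hM
  have hMinj : ∀ v : m → ℝ, M *ᵥ v = 0 → v = 0 := by
    intro v hv
    by_contra hvne
    have hATv : Aᵀ *ᵥ v ≠ 0 := fun h => hvne (hATinj v h)
    have hpos := hQ.dotProduct_mulVec_pos hATv
    have : (Aᵀ *ᵥ v) ⬝ᵥ (Q *ᵥ (Aᵀ *ᵥ v)) = 0 := by
      have : v ⬝ᵥ (M *ᵥ v) = 0 := by rw [hv]; simp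
      rw [hM, ← mulVec_mulVec, dotProduct_mulVec, ← Matrix.mulVec_transpose,
        ← mulVec_mulVec] at this
      exact this
    simp only [star_trivial, RCLike.re_to_real] at hpos
    rw [this] at hpos
    exact lt_irrefl 0 hpos
  -- M injective implies surjective
  have hMsurj : Function.Surjective M.mulVec := by
    have : Function.Injective M.mulVecLin := by
      rw [← LinearMap.ker_eq_bot, LinearMap.ker_eq_bot']
      intro v hv
      exact hMinj v hv
    exact LinearMap.surjective_of_injective (f := M.mulVecLin) this
  obtain ⟨v, hv⟩ := hMsurj (A *ᵥ μ)
  have hker : μ - (Q * Aᵀ) *ᵥ v ∈ LinearMap.ker A.mulVecLin := by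
    simp only [LinearMap.mem_ker, mulVecLin_apply, mulVec_sub]
    rw [mulVec_mulVec, hv]
    simp
  rw [← hB] at hker
  obtain ⟨f, hf⟩ := hker
  refine ⟨(f, v), ?_, ?_⟩
  · simp only [mulVecLin_apply] at hf
    simp only []
    rw [hf]
    abel
  · rintro ⟨f', v'⟩ h'
    simp only [mulVecLin_apply] at hf
    simp only [] at h'
    have heq : Bᵀ *ᵥ f' + (Q * Aᵀ) *ᵥ v' = Bᵀ *ᵥ f + (Q * Aᵀ) *ᵥ v := by
      rw [← h', hf]; abel
    -- apply A
    have hABT : ∀ g : p → ℝ, A *ᵥ (Bᵀ *ᵥ g) = 0 := by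
      intro g
      have : Bᵀ *ᵥ g ∈ LinearMap.range Bᵀ.mulVecLin := ⟨g, rfl⟩
      rw [hB] at this
      simpa using this
    have hv' : M *ᵥ (v' - v) = 0 := by
      have h2 := congrArg (A.mulVec) heq
      rw [mulVec_add, mulVec_add, hABT, hABT, zero_add, zero_add,
        mulVec_mulVec, mulVec_mulVec] at h2
      rw [mulVec_sub, h2, sub_self]
    have hveq : v' = v := by
      have := hMinj _ hv'
      exact sub_eq_zero.mp this
    have hfeq : f' = f := by
      rw [hveq] at heq
      have : Bᵀ *ᵥ (f' - f) = 0 := by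
        rw [mulVec_sub, sub_eq_zero]
        exact add_right_cancel heq
      exact sub_eq_zero.mp (hBTinj _ this)
    simp [hveq, hfeq]
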